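/- For j > 1, let k_j = lp(F_j)/F_j be the exponent of the longest prefix of the Fibonacci infinite word that is an abelian repetition of period F_j, where lp(F_j) = F_j(F_{j+1}+F_{j-1}+1) - 2 for even j and F_j(F_{j+1}+F_{j-1}) - 2 for odd j. Then lim_{j→∞} k_j / F_j = √5. -/

import Mathlib

/-- Fibonacci numbers with the indexing `F 0 = 1`, `F 1 = 1`, `F (j+1) = F j + F (j-1)`. -/
def F (j : ℕ) : ℕ := Nat.fib (j + 1)

/-- The length of the longest prefix of the Fibonacci infinite word that is an abelian
repetition of period `F j` (for `j > 1`). -/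
def lpFib (j : ℕ) : ℕ :=
  if Even j then F j * (F (j + 1) + F (j - 1) + 1) - 2
  else F j * (F (j + 1) + F (j - 1)) - 2

lemma cassini (n : ℕ) :
    (Nat.fib n : ℤ) ^ 2 + Nat.fib n * Nat.fib (n + 1) - Nat.fib (n + 1) ^ 2
      = (-1) ^ (n + 1) := by
  induction n with
  | zero => simp
  | succ n ih =>
    have h := Nat.fib_add_two (n := n)
    have h' : (Nat.fib (n + 2) : ℤ) = Nat.fib n + Nat.fib (n + 1) := by
      exact_mod_cast congrArg (Nat.cast (R := ℤ)) h
    rw [h']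
    ring_nf
    ring_nf at ih
    linarith [ih]

lemma lucas_sq (n : ℕ) :
    ((Nat.fib (n + 2) : ℤ) + Nat.fib n) ^ 2 - 5 * (Nat.fib (n + 1)) ^ 2
      = 4 * (-1) ^ (n + 1) := by
  have h' : (Nat.fib (n + 2) : ℤ) = Nat.fib n + Nat.fib (n + 1) := by
    exact_mod_cast congrArg (Nat.cast (R := ℤ)) (Nat.fib_add_two (n := n))
  have := cassini n
  rw [h']
  linarith [this]

lemma F_pos (j : ℕ) : 0 < F j := by
  simp [F]

lemma F_tendsto : Filter.Tendsto (fun j : ℕ => (F j : ℝ)) Filter.atTop Filter.atTop := by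
  apply Filter.tendsto_atTop_mono' Filter.atTop (f₁ := fun j : ℕ => (j : ℝ))
    _ tendsto_natCast_atTop_atTop
  filter_upwards [Filter.eventually_ge_atTop 5] with j hj
  have h1 : j ≤ Nat.fib j := Nat.le_fib_self hj
  have h2 : Nat.fib j ≤ Nat.fib (j + 1) := Nat.fib_le_fib_succ
  have : j ≤ F j := by simpa [F] using h1.trans h2
  exact_mod_cast this

/-- With `k_j = lp(F_j)/F_j` the exponent of the longest abelian-repetition
prefix of period `F_j` of the Fibonacci word, one has `lim_{j→∞} k_j / F_j = √5`. -/
theorem fibonacci_abelian_exponent_limit :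
    Filter.Tendsto (fun j : ℕ => (lpFib j : ℝ) / (F j : ℝ) / (F j : ℝ))
      Filter.atTop (nhds (Real.sqrt 5)) := by
  rw [← tendsto_sub_nhds_zero_iff]
  apply squeeze_zero_norm' (a := fun j : ℕ => 7 / (F j : ℝ))
  . filter_upwards [Filter.eventually_ge_atTop 1] with j hj
    have hb0 : (0:ℝ) < (F j : ℝ) := by exact_mod_cast F_pos j
    set b : ℝ := (F j : ℝ) with hbdef
    have hF1 : F (j - 1) = Nat.fib j := by
      unfold F; congr 1; omega
    have hL : (F (j + 1) : ℝ) + (F (j - 1) : ℝ) = (Nat.fib (j + 2) : ℝ) + Nat.fib j := by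
      rw [hF1]; norm_num [F]
    set L : ℝ := (F (j + 1) : ℝ) + (F (j - 1) : ℝ) with hLdef
    have hid : |L ^ 2 - 5 * b ^ 2| = 4 := by
      have h := lucas_sq j
      have h2 : L ^ 2 - 5 * b ^ 2 = 4 * (-1:ℝ) ^ (j + 1) := by
        rw [hL]
        have := congrArg (fun x : ℤ => (x : ℝ)) h
        push_cast at this ⊢
        simpa [F, hbdef] using this
      rw [h2]
      rcases Nat.even_or_odd (j + 1) with he | ho
      . rw [he.neg_one_pow]; norm_num
      . rw [ho.neg_one_pow]; norm_num
    have hbL : b ≤ L := by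
      rw [hL, hbdef]
      have h1 : Nat.fib (j + 1) ≤ Nat.fib (j + 2) := Nat.fib_le_fib_succ
      have h2 : (0:ℝ) ≤ (Nat.fib j : ℝ) := by positivity
      have h3 : (Nat.fib (j + 1) : ℝ) ≤ (Nat.fib (j + 2) : ℝ) := by exact_mod_cast h1
      simp only [F]
      linarith
    have hs5 : Real.sqrt 5 * Real.sqrt 5 = 5 := Real.mul_self_sqrt (by norm_num)
    have hs5pos : (0:ℝ) < Real.sqrt 5 := Real.sqrt_pos.mpr (by norm_num)
    have hden : b ≤ L + Real.sqrt 5 * b := by nlinarith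
    have hfac : |L - Real.sqrt 5 * b| * (L + Real.sqrt 5 * b) = 4 := by
      rw [← abs_of_pos (a := L + Real.sqrt 5 * b) (by linarith), ← abs_mul]
      have heq : (L - Real.sqrt 5 * b) * (L + Real.sqrt 5 * b) = L ^ 2 - 5 * b ^ 2 := by
        nlinarith [hs5]
      rw [heq, hid]
    have hclose : |L - Real.sqrt 5 * b| ≤ 4 / b := by
      rw [le_div_iff₀ hb0]
      calc |L - Real.sqrt 5 * b| * b ≤ |L - Real.sqrt 5 * b| * (L + Real.sqrt 5 * b) :=
            mul_le_mul_of_nonneg_left hden (abs_nonneg _)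
        _ = 4 := hfac
    have hL2 : 2 ≤ F (j + 1) + F (j - 1) := by
      have := F_pos (j + 1); have := F_pos (j - 1); omega
    have key : ∃ e : ℝ, (0 ≤ e ∧ e ≤ 1) ∧ (lpFib j : ℝ) = b * (L + e) - 2 := by
      unfold lpFib
      by_cases he : Even j
      . refine ⟨1, ⟨by norm_num, le_refl 1⟩, ?_⟩
        rw [if_pos he]
        have hge : 2 ≤ F j * (F (j + 1) + F (j - 1) + 1) :=
          le_trans (by omega) (Nat.le_mul_of_pos_left _ (F_pos j))
        rw [Nat.cast_sub hge]
        push_cast [hLdef, hbdef]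
        ring
      . refine ⟨0, ⟨le_refl 0, by norm_num⟩, ?_⟩
        rw [if_neg he]
        have hge : 2 ≤ F j * (F (j + 1) + F (j - 1)) :=
          le_trans hL2 (Nat.le_mul_of_pos_left _ (F_pos j))
        rw [Nat.cast_sub hge]
        push_cast [hLdef, hbdef]
        ring
    obtain ⟨e, ⟨he0, he1⟩, hcast⟩ := key
    have hb1 : (1:ℝ) ≤ b := by
      have h : 1 ≤ F j := F_pos j
      rw [hbdef]; exact_mod_cast h
    have hexp : (lpFib j : ℝ) / b / b - Real.sqrt 5
        = (L - Real.sqrt 5 * b) / b + e / b + (-(2 / (b * b))) := by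
      rw [hcast]; field_simp; ring
    rw [Real.norm_eq_abs, hexp]
    have h1 : |(L - Real.sqrt 5 * b) / b| ≤ 4 / (b * b) := by
      rw [abs_div, abs_of_pos hb0, div_le_div_iff₀ hb0 (by positivity)]
      calc |L - Real.sqrt 5 * b| * (b * b) = (|L - Real.sqrt 5 * b| * b) * b := by ring
        _ ≤ (4 / b * b) * b := by
            apply mul_le_mul_of_nonneg_right _ hb0.le
            exact mul_le_mul_of_nonneg_right hclose hb0.le
        _ = 4 * b := by field_simp
    have h2 : |e / b| ≤ 1 / b := by
      rw [abs_div, abs_of_pos hb0]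
      gcongr
      rw [abs_of_nonneg he0]; exact he1
    have h3 : |(-(2 / (b * b)))| = 2 / (b * b) := by
      rw [abs_neg]; exact abs_of_pos (by positivity)
    have hbb : b ≤ b * b := by nlinarith
    have h4 : 4 / (b * b) ≤ 4 / b := div_le_div_of_nonneg_left (by norm_num) hb0 hbb
    have h5 : 2 / (b * b) ≤ 2 / b := div_le_div_of_nonneg_left (by norm_num) hb0 hbb
    calc |(L - Real.sqrt 5 * b) / b + e / b + (-(2 / (b * b)))|
        ≤ |(L - Real.sqrt 5 * b) / b| + |e / b| + |(-(2 / (b * b)))| := abs_add_three _ _ _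
      _ ≤ 4 / (b * b) + 1 / b + 2 / (b * b) := by rw [h3]; linarith
      _ ≤ 7 / b := by
          have h6 : 4 / b + 1 / b + 2 / b = 7 / b := by ring
          linarith
  . exact Filter.Tendsto.div_atTop tendsto_const_nhds F_tendsto
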